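/- Let Θ be a type with a distinguished element θ0, let k ≥ 1, and let Σ̃, Ω : Θ × Θ → (real k×k matrices) satisfy: (kernel symmetry) Σ̃(θ1,θ2)ᵀ = Σ̃(θ2,θ1) and Ω(θ1,θ2)ᵀ = Ω(θ2,θ1) for all θ1, θ2; (nondegeneracy) Σ̃(θ,θ) and Ω(θ,θ) are symmetric positive definite for every θ; and (condition (9)) Ω(θ*,θ*)⁻¹ * Ω(θ*,θ) = Σ̃(θ*,θ*)⁻¹ * Σ̃(θ*,θ) for all θ*, θ ∈ Θ. Define R(θ0,θ) = Σ̃(θ0,θ0)^{-1/2} * Σ̃(θ0,θ) * Σ̃(θ,θ)^{-1/2} and D(θ) = R(θ0,θ) * R(θ0,θ)ᵀ. Assume that no linear subspace of ℝ^k other than the zero subspace and all of ℝ^k is invariant under every matrix D(θ), θ ∈ Θ. Then there exists λ > 0 such that Ω(θ0,θ) = λ · Σ̃(θ0,θ) for all θ ∈ Θ (in particular Ω(θ0,θ0) = λ·Σ̃(θ0,θ0)). -/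

import Mathlib

open Matrix

open scoped ComplexOrder in
noncomputable def Matrix.PosSemidef.sqrt {n 𝕜 : Type*} [Fintype n] [DecidableEq n] [RCLike 𝕜]
    {A : Matrix n n 𝕜} (hA : A.PosSemidef) : Matrix n n 𝕜 :=
  hA.1.eigenvectorUnitary.1 * diagonal ((↑) ∘ (√·) ∘ hA.1.eigenvalues) *
    (star hA.1.eigenvectorUnitary : Matrix n n 𝕜)

theorem sqrtAux_mul_self {k : ℕ} {A : Matrix (Fin k) (Fin k) ℝ} (hA : A.PosSemidef) :
    PosSemidef.sqrt hA * PosSemidef.sqrt hA = A := by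
  have hs := hA.1.spectral_theorem
  have hU : (star hA.1.eigenvectorUnitary : Matrix (Fin k) (Fin k) ℝ) * hA.1.eigenvectorUnitary.1 = 1 :=
    Unitary.star_mul_self_of_mem hA.1.eigenvectorUnitary.2
  unfold PosSemidef.sqrt
  conv_rhs => rw [hs]
  rw [Unitary.conjStarAlgAut_apply]
  simp only [Matrix.mul_assoc]
  rw [← Matrix.mul_assoc (star _ : Matrix (Fin k) (Fin k) ℝ) _ _, hU, Matrix.one_mul, ← Matrix.mul_assoc (diagonal _) (diagonal _) _, diagonal_mul_diagonal]
  congr 3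
  funext i
  simp [Real.mul_self_sqrt (hA.eigenvalues_nonneg i)]

theorem sqrtAux_transpose {k : ℕ} {A : Matrix (Fin k) (Fin k) ℝ} (hA : A.PosSemidef) :
    (PosSemidef.sqrt hA)ᵀ = PosSemidef.sqrt hA := by
  unfold PosSemidef.sqrt
  rw [Matrix.transpose_mul, Matrix.transpose_mul, diagonal_transpose, Matrix.mul_assoc]
  congr 1

theorem sqrtAux_isHermitian {k : ℕ} {A : Matrix (Fin k) (Fin k) ℝ} (hA : A.PosSemidef) :
    (PosSemidef.sqrt hA).IsHermitian := by
  rw [Matrix.IsHermitian, conjTranspose_eq_transpose_of_trivial, sqrtAux_transpose]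

/-- Theorem 3(b) of Andrews–Mikusheva, 'Optimal Decision Rules for Weak GMM':
under kernel symmetry, nondegeneracy, the invariance condition (9), and the
no-common-invariant-subspace condition for the family `D(θ) = R(θ0,θ)R(θ0,θ)ᵀ`,
the prior covariance kernel `Ω` must satisfy `Ω(θ0,·) = λ Σ̃(θ0,·)` for some `λ > 0`. -/
theorem stmt_2 {Θ : Type*} (θ0 : Θ) (k : ℕ) (hk : 1 ≤ k)
    (Sg Om : Θ → Θ → Matrix (Fin k) (Fin k) ℝ)
    (hSgSym : ∀ θ1 θ2, (Sg θ1 θ2)ᵀ = Sg θ2 θ1)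
    (hOmSym : ∀ θ1 θ2, (Om θ1 θ2)ᵀ = Om θ2 θ1)
    (hSgPD : ∀ θ, (Sg θ θ).PosDef)
    (hOmPD : ∀ θ, (Om θ θ).PosDef)
    (hcond : ∀ θs θ, (Om θs θs)⁻¹ * Om θs θ = (Sg θs θs)⁻¹ * Sg θs θ)
    (R D : Θ → Matrix (Fin k) (Fin k) ℝ)
    (hR : ∀ θ, R θ = (PosSemidef.sqrt (hSgPD θ0).posSemidef)⁻¹ * Sg θ0 θ * (PosSemidef.sqrt (hSgPD θ).posSemidef)⁻¹)
    (hD : ∀ θ, D θ = R θ * (R θ)ᵀ)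
    (hirr : ∀ V : Submodule ℝ (Fin k → ℝ),
      (∀ θ : Θ, ∀ v ∈ V, (D θ).mulVec v ∈ V) → V = ⊥ ∨ V = ⊤) :
    ∃ lam : ℝ, 0 < lam ∧ ∀ θ, Om θ0 θ = lam • Sg θ0 θ := by
  classical
  set S : Matrix (Fin k) (Fin k) ℝ := PosSemidef.sqrt (hSgPD θ0).posSemidef with hSdef
  have hSmul : S * S = Sg θ0 θ0 := sqrtAux_mul_self (hSgPD θ0).posSemidef
  have hSH : Sᵀ = S := by
    have h := sqrtAux_isHermitian (hSgPD θ0).posSemidef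
    rwa [Matrix.IsHermitian, conjTranspose_eq_transpose_of_trivial] at h
  have detSg : ∀ θ, IsUnit (Sg θ θ).det := fun θ => (hSgPD θ).det_pos.ne'.isUnit
  have detOm : ∀ θ, IsUnit (Om θ θ).det := fun θ => (hOmPD θ).det_pos.ne'.isUnit
  have hSdet : IsUnit S.det := by
    have h0 : (0:ℝ) < (Sg θ0 θ0).det := (hSgPD θ0).det_pos
    rw [← hSmul, det_mul] at h0
    have hne : S.det ≠ 0 := by intro h; rw [h, mul_zero] at h0; exact lt_irrefl _ h0
    exact hne.isUnit
  have hSS : ∀ X : Matrix (Fin k) (Fin k) ℝ, S⁻¹ * (S⁻¹ * X) = (Sg θ0 θ0)⁻¹ * X := by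
    intro X
    rw [← Matrix.mul_assoc, ← Matrix.mul_inv_rev, hSmul]
  -- Key identity: Ω(a,a) Σ(a,a)⁻¹ Σ(a,b) = Σ(a,b) Σ(b,b)⁻¹ Ω(b,b)
  have keyE : ∀ a b, ∀ X : Matrix (Fin k) (Fin k) ℝ,
      Om a a * ((Sg a a)⁻¹ * (Sg a b * X)) = Sg a b * ((Sg b b)⁻¹ * (Om b b * X)) := by
    have key : ∀ a b, Om a a * ((Sg a a)⁻¹ * Sg a b) = Sg a b * ((Sg b b)⁻¹ * Om b b) := by
      intro a b
      have h1 : Om a b = Om a a * ((Sg a a)⁻¹ * Sg a b) := by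
        rw [← hcond a b, Matrix.mul_nonsing_inv_cancel_left _ _ (detOm a)]
      have h2' : Om b a = Om b b * ((Sg b b)⁻¹ * Sg b a) := by
        rw [← hcond b a, Matrix.mul_nonsing_inv_cancel_left _ _ (detOm b)]
      have h2 : Om a b = Sg a b * ((Sg b b)⁻¹ * Om b b) := by
        have := congrArg Matrix.transpose h2'
        rw [hOmSym b a, Matrix.transpose_mul, Matrix.transpose_mul,
          Matrix.transpose_nonsing_inv, hSgSym b b, hSgSym b a, hOmSym b b] at this
        rw [this, Matrix.mul_assoc]
      rw [← h1, h2]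
    intro a b X
    calc Om a a * ((Sg a a)⁻¹ * (Sg a b * X))
        = (Om a a * ((Sg a a)⁻¹ * Sg a b)) * X := by
          simp only [Matrix.mul_assoc]
      _ = (Sg a b * ((Sg b b)⁻¹ * Om b b)) * X := by rw [key a b]
      _ = Sg a b * ((Sg b b)⁻¹ * (Om b b * X)) := by
          simp only [Matrix.mul_assoc]
  -- the conjugated prior variance
  set B : Matrix (Fin k) (Fin k) ℝ := S⁻¹ * (Om θ0 θ0 * S⁻¹) with hBdef
  -- explicit form of D θ
  have hDform : ∀ θ, D θ = S⁻¹ * (Sg θ0 θ * ((Sg θ θ)⁻¹ * (Sg θ θ0 * S⁻¹))) := by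
    intro θ
    set T : Matrix (Fin k) (Fin k) ℝ := PosSemidef.sqrt (hSgPD θ).posSemidef with hTdef
    have hTmul : T * T = Sg θ θ := sqrtAux_mul_self (hSgPD θ).posSemidef
    have hTH : Tᵀ = T := by
      have h := sqrtAux_isHermitian (hSgPD θ).posSemidef
      rwa [Matrix.IsHermitian, conjTranspose_eq_transpose_of_trivial] at h
    have hRT : (R θ)ᵀ = T⁻¹ * (Sg θ θ0 * S⁻¹) := by
      rw [hR θ, Matrix.transpose_mul, Matrix.transpose_mul,
        Matrix.transpose_nonsing_inv, Matrix.transpose_nonsing_inv, hSH, hTH,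
        hSgSym θ0 θ]
    have hTT : ∀ X : Matrix (Fin k) (Fin k) ℝ, T⁻¹ * (T⁻¹ * X) = (Sg θ θ)⁻¹ * X := by
      intro X
      rw [← Matrix.mul_assoc, ← Matrix.mul_inv_rev, hTmul]
    rw [hD θ, hRT, hR θ]
    simp only [Matrix.mul_assoc]
    rw [hTT]
  -- B commutes with each D θ
  have hcomm : ∀ θ, B * D θ = D θ * B := by
    intro θ
    rw [hDform θ, hBdef]
    simp only [Matrix.mul_assoc]
    rw [hSS, keyE θ0 θ, ← Matrix.mul_assoc (Sg θ θ0) S⁻¹ _, Matrix.mul_assoc (Sg θ θ0) _ _, hSS,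
      ← keyE θ θ0 S⁻¹]
  -- B is symmetric
  have hBT : Bᵀ = B := by
    rw [hBdef, Matrix.transpose_mul, Matrix.transpose_mul, Matrix.transpose_nonsing_inv,
      hSH, hOmSym θ0 θ0, Matrix.mul_assoc]
  have hBH : B.IsHermitian := by
    rw [Matrix.IsHermitian, conjTranspose_eq_transpose_of_trivial, hBT]
  -- an eigenvalue / eigenvector of B
  have i0 : Fin k := ⟨0, hk⟩
  set μ : ℝ := hBH.eigenvalues i0 with hμdef
  set e : Fin k → ℝ := ⇑(hBH.eigenvectorBasis i0) with hedef
  have he : B *ᵥ e = μ • e := hBH.mulVec_eigenvectorBasis i0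
  have hene : e ≠ 0 := by
    have h := hBH.eigenvectorBasis.orthonormal.ne_zero i0
    intro h0
    apply h
    ext i
    exact congrFun h0 i
  -- the eigenspace of μ
  let V : Submodule ℝ (Fin k → ℝ) :=
    { carrier := {v | B *ᵥ v = μ • v}
      add_mem' := by
        intro a b ha hb
        simp only [Set.mem_setOf_eq] at *
        rw [Matrix.mulVec_add, ha, hb, smul_add]
      zero_mem' := by simp [Set.mem_setOf_eq]
      smul_mem' := by
        intro c v hv
        simp only [Set.mem_setOf_eq] at *
        rw [Matrix.mulVec_smul, hv, smul_comm] }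
    -- invariance of V under D θ
  have hinv : ∀ θ : Θ, ∀ v ∈ V, (D θ).mulVec v ∈ V := by
    intro θ v hv
    have hv' : B *ᵥ v = μ • v := hv
    show B *ᵥ ((D θ) *ᵥ v) = μ • ((D θ) *ᵥ v)
    rw [Matrix.mulVec_mulVec, hcomm θ, ← Matrix.mulVec_mulVec, hv', Matrix.mulVec_smul]
  have hVtop : V = ⊤ := by
    rcases hirr V hinv with hbot | htop
    · exfalso
      have : e ∈ V := he
      rw [hbot] at this
      exact hene this
    · exact htop
  -- hence B = μ • 1
  have hB1 : B = μ • (1 : Matrix (Fin k) (Fin k) ℝ) := by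
    ext i j
    have hmem : (Pi.single j 1 : Fin k → ℝ) ∈ V := by rw [hVtop]; trivial
    have hv : B *ᵥ Pi.single j 1 = μ • (Pi.single j 1 : Fin k → ℝ) := hmem
    have := congrFun hv i
    simp only [Matrix.mulVec_single_one, Matrix.col_apply, mul_one, Pi.smul_apply, smul_eq_mul] at this
    rw [this]
    by_cases hij : i = j
    · subst hij; simp
    · simp [Pi.single_eq_of_ne hij, Matrix.one_apply_ne hij]
  -- Ω(θ0,θ0) = μ • Σ(θ0,θ0)
  have hOm00 : Om θ0 θ0 = μ • Sg θ0 θ0 := by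
    have h1 : S * (B * S) = Om θ0 θ0 := by
      rw [hBdef]
      simp only [Matrix.mul_assoc]
      rw [Matrix.nonsing_inv_mul S hSdet, Matrix.mul_one,
        Matrix.mul_nonsing_inv_cancel_left _ _ hSdet]
    rw [← h1, hB1, Matrix.smul_mul, Matrix.mul_smul, Matrix.one_mul, hSmul]
  refine ⟨μ, ?_, ?_⟩
  · -- positivity of μ
    have hx : (Pi.single i0 1 : Fin k → ℝ) ≠ 0 := by
      intro h
      have := congrFun h i0
      simp at this
    have h1 : (0:ℝ) < dotProduct (star (Pi.single i0 1 : Fin k → ℝ))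
        ((Om θ0 θ0) *ᵥ (Pi.single i0 1)) := (hOmPD θ0).dotProduct_mulVec_pos hx
    have h2 : (0:ℝ) < dotProduct (star (Pi.single i0 1 : Fin k → ℝ))
        ((Sg θ0 θ0) *ᵥ (Pi.single i0 1)) := (hSgPD θ0).dotProduct_mulVec_pos hx
    rw [hOm00, Matrix.smul_mulVec, dotProduct_smul, smul_eq_mul] at h1
    nlinarith
  · intro θ
    have h1 : Om θ0 θ = Om θ0 θ0 * ((Sg θ0 θ0)⁻¹ * Sg θ0 θ) := by
      rw [← hcond θ0 θ, Matrix.mul_nonsing_inv_cancel_left _ _ (detOm θ0)]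
    rw [h1, hOm00, Matrix.smul_mul, Matrix.mul_nonsing_inv_cancel_left _ _ (detSg θ0)]
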